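/- arXiv:2209.08004 — 2 statements merged into one kernel-verified Lean document; each statement's English description precedes it below -/
import Mathlib

section
/- For every index i one has (1 − δ)/(1 + ε) ≤ (v_i/v̂_i)² and (1 − δ)(1 − ε)(v_i/v̂_i)² ≤ 1 (equivalently, √((1−δ)/(1+ε)) ≤ v_i/v̂_i ≤ √(1/((1−δ)(1−ε))) when δ < 1), where δ = min{ 1 , 4ε / ((n − 2) · min_{i ≠ j} v̂_i A_{i,j} v̂_j) }. -/
open Finset

/-- Stability of doubly stochastic scaling factors.
For every index `i`, `(1 - δ)/(1 + ε) ≤ (v i / v̂ i)²` and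
`(1 - δ)(1 - ε)(v i / v̂ i)² ≤ 1`, where
`δ = min 1 (4ε / ((n - 2) · min_{i ≠ j} v̂ i * A i j * v̂ j))`. -/
theorem doubly_stochastic_scaling_factor_stability
    {n : ℕ} (hn : 3 ≤ n)
    (A : Fin n → Fin n → ℝ)
    (hA_symm : ∀ i j, A i j = A j i)
    (hA_nonneg : ∀ i j, 0 ≤ A i j)
    (hA_diag : ∀ i, A i i = 0)
    (hA_offdiag : ∀ i j, i ≠ j → 0 < A i j)
    (v : Fin n → ℝ) (hv : ∀ i, 0 < v i)
    (hds : ∀ i, ∑ j, v i * A i j * v j = 1)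
    (ε : ℝ) (hε0 : 0 < ε) (hε1 : ε < 1)
    (vh : Fin n → ℝ) (hvh : ∀ i, 0 < vh i)
    (happrox : ∀ i, |∑ j, vh i * A i j * vh j - 1| ≤ ε)
    (δ : ℝ)
    (hδ : δ = min 1 (4 * ε / (((n : ℝ) - 2) *
      Finset.inf' (Finset.univ.filter (fun p : Fin n × Fin n => p.1 ≠ p.2))
        ⟨(⟨0, by omega⟩, ⟨1, by omega⟩), by
          simp only [Finset.mem_filter, Finset.mem_univ, true_and]
          exact Fin.ne_of_val_ne (by simp)⟩
        (fun p => vh p.1 * A p.1 p.2 * vh p.2)))) :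
    ∀ i, (1 - δ) / (1 + ε) ≤ (v i / vh i) ^ 2 ∧
      (1 - δ) * (1 - ε) * (v i / vh i) ^ 2 ≤ 1 := by
  have hne : (Finset.univ.filter (fun p : Fin n × Fin n => p.1 ≠ p.2)).Nonempty :=
    ⟨(⟨0, by omega⟩, ⟨1, by omega⟩), by
      simp only [Finset.mem_filter, Finset.mem_univ, true_and]
      exact Fin.ne_of_val_ne (by simp)⟩
  set M : ℝ := Finset.inf' (Finset.univ.filter (fun p : Fin n × Fin n => p.1 ≠ p.2)) hne
      (fun p => vh p.1 * A p.1 p.2 * vh p.2) with hM_def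
  have hδ' : δ = min 1 (4 * ε / (((n : ℝ) - 2) * M)) := hδ
  clear hδ
  -- basic positivity
  have hn2 : (0:ℝ) < (n : ℝ) - 2 := by
    have : (3:ℝ) ≤ (n:ℝ) := by exact_mod_cast hn
    linarith
  have hMpos : 0 < M := by
    rw [hM_def]
    rw [Finset.lt_inf'_iff]
    intro b hb
    simp only [Finset.mem_filter, Finset.mem_univ, true_and] at hb
    exact mul_pos (mul_pos (hvh b.1) (hA_offdiag b.1 b.2 hb)) (hvh b.2)
  have hMle : ∀ a b : Fin n, a ≠ b → M ≤ vh a * A a b * vh b := by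
    intro a b hab
    have hmem : (a, b) ∈ Finset.univ.filter (fun p : Fin n × Fin n => p.1 ≠ p.2) := by
      simp only [Finset.mem_filter, Finset.mem_univ, true_and]
      exact hab
    calc M ≤ (fun p : Fin n × Fin n => vh p.1 * A p.1 p.2 * vh p.2) (a, b) :=
          Finset.inf'_le _ hmem
      _ = vh a * A a b * vh b := rfl
  obtain ⟨u, hu_eq⟩ : ∃ u : Fin n → ℝ, ∀ k, u k = v k / vh k :=
    ⟨fun k => v k / vh k, fun _ => rfl⟩
  have hu_pos : ∀ k, 0 < u k := fun k => (hu_eq k) ▸ div_pos (hv k) (hvh k)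
  have hub : ∀ k, ∑ j, vh k * A k j * vh j ≤ 1 + ε := by
    intro k
    have h := abs_le.mp (happrox k)
    linarith [h.2]
  have hlb : ∀ k, 1 - ε ≤ ∑ j, vh k * A k j * vh j := by
    intro k
    have h := abs_le.mp (happrox k)
    linarith [h.1]
  have hC_nonneg : ∀ a b : Fin n, 0 ≤ vh a * A a b * vh b := fun a b =>
    mul_nonneg (mul_nonneg (hvh a).le (hA_nonneg a b)) (hvh b).le
  have hrow_u : ∀ k, ∑ j, u k * u j * (vh k * A k j * vh j) = 1 := by
    intro k
    rw [← hds k]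
    apply Finset.sum_congr rfl
    intro j _
    have h1 : vh k ≠ 0 := (hvh k).ne'
    have h2 : vh j ≠ 0 := (hvh j).ne'
    rw [hu_eq k, hu_eq j]
    field_simp
  -- max and min of u
  have hNe : Nonempty (Fin n) := ⟨⟨0, by omega⟩⟩
  obtain ⟨p, -, hp⟩ := Finset.exists_max_image Finset.univ u Finset.univ_nonempty
  obtain ⟨q, -, hq⟩ := Finset.exists_min_image Finset.univ u Finset.univ_nonempty
  have hp' : ∀ j, u j ≤ u p := fun j => hp j (Finset.mem_univ j)
  have hq' : ∀ j, u q ≤ u j := fun j => hq j (Finset.mem_univ j)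
  -- key row bounds
  have key1 : ∀ k, 1 ≤ u k * u p * (1 + ε) := by
    intro k
    have h1 : (1:ℝ) ≤ u k * u p * (∑ j, vh k * A k j * vh j) := by
      rw [← hrow_u k, Finset.mul_sum]
      apply Finset.sum_le_sum
      intro j _
      have : u k * u j * (vh k * A k j * vh j) ≤ u k * u p * (vh k * A k j * vh j) := by
        apply mul_le_mul_of_nonneg_right _ (hC_nonneg k j)
        exact mul_le_mul_of_nonneg_left (hp' j) (hu_pos k).le
      linarith
    calc (1:ℝ) ≤ u k * u p * (∑ j, vh k * A k j * vh j) := h1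
      _ ≤ u k * u p * (1 + ε) :=
        mul_le_mul_of_nonneg_left (hub k) (mul_pos (hu_pos k) (hu_pos p)).le
  have key2 : ∀ k, u k * u q * (1 - ε) ≤ 1 := by
    intro k
    have h1 : u k * u q * (∑ j, vh k * A k j * vh j) ≤ 1 := by
      rw [← hrow_u k, Finset.mul_sum]
      apply Finset.sum_le_sum
      intro j _
      apply mul_le_mul_of_nonneg_right _ (hC_nonneg k j)
      exact mul_le_mul_of_nonneg_left (hq' j) (hu_pos k).le
    calc u k * u q * (1 - ε)
        ≤ u k * u q * (∑ j, vh k * A k j * vh j) :=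
          mul_le_mul_of_nonneg_left (hlb k) (mul_pos (hu_pos k) (hu_pos q)).le
      _ ≤ 1 := h1
  -- the main gap bound
  have hD : u p - u q ≤ (4 * ε / (((n : ℝ) - 2) * M)) * u p := by
    rcases le_or_gt (u p) (u q) with hle | hlt
    · have : 0 < (4 * ε / (((n : ℝ) - 2) * M)) * u p :=
        mul_pos (div_pos (by linarith) (mul_pos hn2 hMpos)) (hu_pos p)
      linarith
    · -- u q < u p, so p ≠ q
      have hpq : p ≠ q := by
        intro h
        rw [h] at hlt
        exact lt_irrefl _ hlt
      set s : Finset (Fin n) := Finset.univ \ {p, q} with hs_def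
      have hcard : s.card = n - 2 := by
        rw [hs_def, Finset.card_sdiff_of_subset (Finset.subset_univ _), Finset.card_pair hpq]
        simp
      have hjs : ∀ j ∈ s, j ≠ p ∧ j ≠ q := by
        intro j hj
        rw [hs_def, Finset.mem_sdiff, Finset.mem_insert, Finset.mem_singleton] at hj
        push_neg at hj
        exact hj.2
      set T : ℝ := ∑ j ∈ s, (u p - u j) with hT_def
      set T' : ℝ := ∑ j ∈ s, (u j - u q) with hT'_def
      have hTT : T + T' = ((n:ℝ) - 2) * (u p - u q) := by
        rw [hT_def, hT'_def, ← Finset.sum_add_distrib]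
        have : ∑ j ∈ s, ((u p - u j) + (u j - u q)) = ∑ j ∈ s, (u p - u q) := by
          apply Finset.sum_congr rfl; intros; ring
        rw [this, Finset.sum_const, hcard, nsmul_eq_mul]
        have : ((n - 2 : ℕ) : ℝ) = (n:ℝ) - 2 := by
          have : 2 ≤ n := by omega
          push_cast [Nat.cast_sub this]
          ring
        rw [this]
      -- inequality (a): row q
      have ha : M * T ≤ u p * (1 + ε) - ∑ j, u j * (vh q * A q j * vh j) := by
        have h1 : M * T ≤ ∑ j ∈ s, (u p - u j) * (vh q * A q j * vh j) := by
          rw [hT_def, Finset.mul_sum]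
          apply Finset.sum_le_sum
          intro j hj
          rw [mul_comm]
          apply mul_le_mul_of_nonneg_left (hMle q j (Ne.symm (hjs j hj).2))
          linarith [hp' j]
        have h2 : ∑ j ∈ s, (u p - u j) * (vh q * A q j * vh j)
            ≤ ∑ j, (u p - u j) * (vh q * A q j * vh j) := by
          apply Finset.sum_le_sum_of_subset_of_nonneg (Finset.subset_univ _)
          intro j _ _
          exact mul_nonneg (by linarith [hp' j]) (hC_nonneg q j)
        have h3 : ∑ j, (u p - u j) * (vh q * A q j * vh j)
            = u p * (∑ j, vh q * A q j * vh j) - ∑ j, u j * (vh q * A q j * vh j) := by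
          rw [Finset.mul_sum, ← Finset.sum_sub_distrib]
          apply Finset.sum_congr rfl; intros; ring
        have h4 : u p * (∑ j, vh q * A q j * vh j) ≤ u p * (1 + ε) :=
          mul_le_mul_of_nonneg_left (hub q) (hu_pos p).le
        linarith
      -- inequality (b): row p
      have hb : u q * (1 - ε) + M * T' ≤ ∑ j, u j * (vh p * A p j * vh j) := by
        have h1 : M * T' ≤ ∑ j ∈ s, (u j - u q) * (vh p * A p j * vh j) := by
          rw [hT'_def, Finset.mul_sum]
          apply Finset.sum_le_sum
          intro j hj
          rw [mul_comm]
          apply mul_le_mul_of_nonneg_left (hMle p j (Ne.symm (hjs j hj).1))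
          linarith [hq' j]
        have h2 : ∑ j ∈ s, (u j - u q) * (vh p * A p j * vh j)
            ≤ ∑ j, (u j - u q) * (vh p * A p j * vh j) := by
          apply Finset.sum_le_sum_of_subset_of_nonneg (Finset.subset_univ _)
          intro j _ _
          exact mul_nonneg (by linarith [hq' j]) (hC_nonneg p j)
        have h3 : ∑ j, (u j - u q) * (vh p * A p j * vh j)
            = ∑ j, u j * (vh p * A p j * vh j) - u q * (∑ j, vh p * A p j * vh j) := by
          rw [Finset.mul_sum, ← Finset.sum_sub_distrib]
          apply Finset.sum_congr rfl; intros; ring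
        have h4 : u q * (1 - ε) ≤ u q * (∑ j, vh p * A p j * vh j) :=
          mul_le_mul_of_nonneg_left (hlb p) (hu_pos q).le
        linarith
      -- S1, S2 values
      set S1 : ℝ := ∑ j, u j * (vh p * A p j * vh j) with hS1_def
      set S2 : ℝ := ∑ j, u j * (vh q * A q j * vh j) with hS2_def
      have hS1 : u p * S1 = 1 := by
        rw [hS1_def, Finset.mul_sum, ← hrow_u p]
        apply Finset.sum_congr rfl; intros; ring
      have hS2 : u q * S2 = 1 := by
        rw [hS2_def, Finset.mul_sum, ← hrow_u q]
        apply Finset.sum_congr rfl; intros; ring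
      -- fraction bound: (u p - u q) * (1 - ε) ≤ S2 - S1
      have e1 : S2 * (u p * u q) = u p := by linear_combination u p * hS2
      have e2 : S1 * (u p * u q) = u q := by linear_combination u q * hS1
      have hfrac : (u p - u q) * (1 - ε) ≤ S2 - S1 := by
        have h4 : (u p - u q) * (1 - ε) * (u p * u q) ≤ (S2 - S1) * (u p * u q) := by
          have h5 : (S2 - S1) * (u p * u q) = u p - u q := by linarith [e1, e2]
          rw [h5]
          nlinarith [mul_le_mul_of_nonneg_left (key2 p) (by linarith : (0:ℝ) ≤ u p - u q)]
        exact le_of_mul_le_mul_right h4 (mul_pos (hu_pos p) (hu_pos q))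
      -- combine everything
      have hMT : M * T + M * T' = M * (((n:ℝ) - 2) * (u p - u q)) := by
        rw [← mul_add, hTT]
      have hmain : M * (((n:ℝ) - 2) * (u p - u q)) ≤ 2 * ε * u p := by
        nlinarith [ha, hb, hfrac, hMT]
      rw [div_mul_eq_mul_div, le_div_iff₀ (mul_pos hn2 hMpos)]
      nlinarith [hmain, mul_pos hε0 (hu_pos p)]
  -- from hD to hkey
  have hδ0 : 0 ≤ δ := by
    rw [hδ']
    apply le_min (by norm_num)
    positivity
  have hδ1 : δ ≤ 1 := by rw [hδ']; exact min_le_left _ _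
  have hkey : (1 - δ) * u p ≤ u q := by
    rcases le_total (4 * ε / (((n : ℝ) - 2) * M)) 1 with h | h
    · rw [hδ', min_eq_right h]
      linarith
    · rw [hδ', min_eq_left h]
      simpa using (hu_pos q).le
  -- conclusion
  intro i
  have hui : (v i / vh i) = u i := (hu_eq i).symm
  rw [hui]
  constructor
  · rw [div_le_iff₀ (by linarith : (0:ℝ) < 1 + ε)]
    have h1 : (1 - δ) * u p ≤ u i := le_trans hkey (hq' i)
    have ha1 : (1 - δ) * 1 ≤ (1 - δ) * (u i * u p * (1 + ε)) :=
      mul_le_mul_of_nonneg_left (key1 i) (by linarith)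
    have ha2 : ((1 - δ) * u p) * (u i * (1 + ε)) ≤ u i * (u i * (1 + ε)) :=
      mul_le_mul_of_nonneg_right h1
        (mul_nonneg (hu_pos i).le (by linarith))
    nlinarith [ha1, ha2]
  · have h1 : (1 - δ) * u i ≤ u q := by
      calc (1 - δ) * u i ≤ (1 - δ) * u p :=
            mul_le_mul_of_nonneg_left (hp' i) (by linarith)
        _ ≤ u q := hkey
    have hb1 : ((1 - δ) * u i) * ((1 - ε) * u i) ≤ u q * ((1 - ε) * u i) :=
      mul_le_mul_of_nonneg_right h1
        (mul_nonneg (by linarith) (hu_pos i).le)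
    have hb2 := key2 i
    nlinarith [hb1, hb2]
end

section
/- Superlevel set bound for a Gaussian-kernel scaling function (abstract form of the boundedness lemma for ρ_ε): let m ≥ 1, ε > 0, Z > 0, let μ be a finite Borel measure on ℝ^m, and let ρ : ℝ^m → ℝ be a continuous function with ρ(x) > 0 for every x in the (topological) support of μ, satisfying the scaling equation ρ(x) · ∫ exp( −‖x − y‖²/ε ) ρ(y) dμ(y) = Z for every x in the support of μ. Suppose κ is a natural number such that every finite set of points in the support of μ whose pairwise distances all exceed 2√ε has cardinality at most κ. Then for every t > 0, μ{ x : ρ(x) > t } ≤ e⁴ · κ · Z / t². -/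
open MeasureTheory
open scoped ENNReal

/-- The (topological) support of a Borel measure: the set of points all of whose open
neighborhoods have positive measure.  It is the smallest closed set of full measure
for Borel measures on second-countable spaces such as `ℝ^m`. -/
def measureSupport {X : Type*} [TopologicalSpace X] [MeasurableSpace X]
    (μ : Measure X) : Set X :=
  {x | ∀ U : Set X, IsOpen U → x ∈ U → 0 < μ U}

lemma measureSupport_compl_eq {X : Type*} [TopologicalSpace X] [MeasurableSpace X]
    (μ : Measure X) : (measureSupport μ)ᶜ = ⋃₀ {U | IsOpen U ∧ μ U = 0} := by
  ext x
  simp only [measureSupport, Set.mem_compl_iff, Set.mem_setOf_eq, not_forall, Set.mem_sUnion]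
  constructor
  · rintro ⟨U, hU, hxU, hμU⟩
    exact ⟨U, ⟨hU, le_antisymm (not_lt.mp hμU) zero_le⟩, hxU⟩
  · rintro ⟨U, ⟨hU, hμU⟩, hxU⟩
    exact ⟨U, hU, hxU, by simp [hμU]⟩

lemma isClosed_measureSupport {X : Type*} [TopologicalSpace X] [MeasurableSpace X]
    (μ : Measure X) : IsClosed (measureSupport μ) := by
  rw [← isOpen_compl_iff, measureSupport_compl_eq]
  exact isOpen_sUnion fun U hU => hU.1

lemma measureSupport_compl_null {X : Type*} [TopologicalSpace X] [MeasurableSpace X]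
    [SecondCountableTopology X]
    (μ : Measure X) : μ (measureSupport μ)ᶜ = 0 := by
  rw [measureSupport_compl_eq]
  obtain ⟨T, hTc, hTS, hT⟩ :=
    TopologicalSpace.isOpen_sUnion_countable {U | IsOpen U ∧ μ U = 0} (fun s hs => hs.1)
  rw [← hT]
  exact (measure_sUnion_null_iff hTc).2 fun s hs => (hTS hs).2


/-- Superlevel set bound for a Gaussian-kernel scaling function.  If
`ρ` is continuous, positive on the support of the finite Borel measure `μ`, satisfies
the scaling equation `ρ(x) · ∫ exp(−‖x − y‖²/ε) ρ(y) dμ(y) = Z` on the support of `μ`,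
and every finite subset of the support whose pairwise distances all exceed `2√ε` has
cardinality at most `κ`, then `μ{x : ρ(x) > t} ≤ e⁴ κ Z / t²` for every `t > 0`. -/
theorem scaling_function_superlevel_bound
    {m : ℕ} (hm : 1 ≤ m) {ε Z : ℝ} (hε : 0 < ε) (hZ : 0 < Z)
    (μ : Measure (EuclideanSpace ℝ (Fin m))) [IsFiniteMeasure μ]
    (ρ : EuclideanSpace ℝ (Fin m) → ℝ) (hρcont : Continuous ρ)
    (hρpos : ∀ x ∈ measureSupport μ, 0 < ρ x)
    (hscal : ∀ x ∈ measureSupport μ,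
      ρ x * ∫ y, Real.exp (-‖x - y‖ ^ 2 / ε) * ρ y ∂μ = Z)
    (κ : ℕ)
    (hκ : ∀ S : Finset (EuclideanSpace ℝ (Fin m)),
      (∀ x ∈ S, x ∈ measureSupport μ) →
      (∀ x ∈ S, ∀ y ∈ S, x ≠ y → 2 * Real.sqrt ε < dist x y) →
      S.card ≤ κ) :
    ∀ t : ℝ, 0 < t →
      μ {x | t < ρ x} ≤ ENNReal.ofReal (Real.exp 4 * κ * Z / t ^ 2) := by
  classical
  intro t ht
  set M := measureSupport μ with hM
  set r : ℝ := 2 * Real.sqrt ε with hr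
  have hr0 : 0 ≤ r := by positivity
  set A : Set (EuclideanSpace ℝ (Fin m)) := {x | t < ρ x} with hA
  have hAopen : IsOpen A := isOpen_lt continuous_const hρcont
  have hMnull : μ Mᶜ = 0 := measureSupport_compl_null μ
  have hMmeas : MeasurableSet M := (isClosed_measureSupport μ).measurableSet
  have haeM : ∀ᵐ y ∂μ, y ∈ M := by
    rw [ae_iff]
    exact hMnull
  -- key ball bound
  have hball : ∀ x ∈ A ∩ M,
      μ (A ∩ Metric.closedBall x r) ≤ ENNReal.ofReal (Real.exp 4 * Z / t ^ 2) := by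
    intro x hx
    set f : EuclideanSpace ℝ (Fin m) → ℝ := fun y => Real.exp (-‖x - y‖ ^ 2 / ε) * ρ y with hf
    have hxA : t < ρ x := hx.1
    have hρx : 0 < ρ x := lt_trans ht hxA
    have hsc := hscal x hx.2
    have hfint : Integrable f μ := by
      by_contra h
      rw [integral_undef h, mul_zero] at hsc
      exact hZ.ne' hsc.symm
    have hInt : ∫ y, f y ∂μ = Z / ρ x := by
      field_simp at hsc ⊢
      have e : ∫ y, f y ∂μ = ∫ (y : EuclideanSpace ℝ (Fin m)), Real.exp (-(‖x - y‖ ^ 2 / ε)) * ρ y ∂μ := by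
        simp only [hf, neg_div]
      rw [e]
      linarith [hsc]
    have hIle : ∫ y, f y ∂μ ≤ Z / t := by
      rw [hInt]
      exact div_le_div_of_nonneg_left hZ.le ht hxA.le
    have hf0 : 0 ≤ᵐ[μ] f := by
      filter_upwards [haeM] with y hy
      exact mul_nonneg (Real.exp_pos _).le (hρpos y hy).le
    set S : Set (EuclideanSpace ℝ (Fin m)) := A ∩ Metric.closedBall x r ∩ M with hS
    have hSmeas : MeasurableSet S :=
      ((hAopen.measurableSet.inter Metric.isClosed_closedBall.measurableSet).inter hMmeas)
    have hlow : ∀ y ∈ S, Real.exp (-4) * t ≤ f y := by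
      rintro y ⟨⟨hyA, hyB⟩, hyM⟩
      have hdist : ‖x - y‖ ≤ r := by
        rw [← dist_eq_norm, dist_comm]
        exact hyB
      have h4 : ‖x - y‖ ^ 2 / ε ≤ 4 := by
        rw [div_le_iff₀ hε]
        calc ‖x - y‖ ^ 2 ≤ r ^ 2 := by
              apply sq_le_sq' _ hdist
              linarith [norm_nonneg (x - y)]
          _ = 4 * ε := by
              rw [hr]
              rw [mul_pow, Real.sq_sqrt hε.le]
              norm_num
      have hexp : Real.exp (-4) ≤ Real.exp (-‖x - y‖ ^ 2 / ε) := by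
        apply Real.exp_le_exp.2
        rw [neg_div]
        linarith
      have : t ≤ ρ y := le_of_lt hyA
      calc Real.exp (-4) * t ≤ Real.exp (-‖x - y‖ ^ 2 / ε) * t :=
            mul_le_mul_of_nonneg_right hexp ht.le
        _ ≤ Real.exp (-‖x - y‖ ^ 2 / ε) * ρ y :=
            mul_le_mul_of_nonneg_left this (Real.exp_pos _).le
    have hμSfin : μ S ≠ ⊤ := (measure_lt_top μ S).ne
    have h1 : Real.exp (-4) * t * (μ S).toReal ≤ ∫ y in S, f y ∂μ :=
      by have := setIntegral_ge_of_const_le_real hSmeas hμSfin hlow (hfint.integrableOn); exact this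
    have h2 : ∫ y in S, f y ∂μ ≤ ∫ y, f y ∂μ :=
      setIntegral_le_integral hfint hf0
    have h3 : Real.exp (-4) * t * (μ S).toReal ≤ Z / t := le_trans h1 (le_trans h2 hIle)
    have hμSr : (μ S).toReal ≤ Real.exp 4 * Z / t ^ 2 := by
      have hE : 0 < Real.exp 4 := Real.exp_pos 4
      have h4 : Real.exp (-4) * Real.exp 4 = 1 := by rw [← Real.exp_add]; norm_num
      rw [le_div_iff₀ ht] at h3
      rw [le_div_iff₀ (show (0:ℝ) < t ^ 2 by positivity)]
      have h5 := mul_le_mul_of_nonneg_left h3 hE.le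
      have h6 : Real.exp 4 * (Real.exp (-4) * t * (μ S).toReal * t)
          = (μ S).toReal * t ^ 2 := by
        calc Real.exp 4 * (Real.exp (-4) * t * (μ S).toReal * t)
            = (Real.exp (-4) * Real.exp 4) * ((μ S).toReal * t ^ 2) := by ring
          _ = (μ S).toReal * t ^ 2 := by rw [h4]; ring
      linarith [h5, h6]
    have hcover : μ (A ∩ Metric.closedBall x r) ≤ μ S := by
      have : A ∩ Metric.closedBall x r ⊆ S ∪ Mᶜ := by
        intro y hy
        by_cases hyM : y ∈ M
        · exact Or.inl ⟨hy, hyM⟩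
        · exact Or.inr hyM
      calc μ (A ∩ Metric.closedBall x r) ≤ μ (S ∪ Mᶜ) := measure_mono this
        _ ≤ μ S + μ Mᶜ := measure_union_le _ _
        _ = μ S := by rw [hMnull, add_zero]
    calc μ (A ∩ Metric.closedBall x r) ≤ μ S := hcover
      _ = ENNReal.ofReal (μ S).toReal := (ENNReal.ofReal_toReal hμSfin).symm
      _ ≤ ENNReal.ofReal (Real.exp 4 * Z / t ^ 2) := ENNReal.ofReal_le_ofReal hμSr
  -- maximal separated set
  set P : ℕ → Prop := fun n => ∃ S : Finset (EuclideanSpace ℝ (Fin m)),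
    (∀ x ∈ S, x ∈ A ∩ M) ∧
    (∀ x ∈ S, ∀ y ∈ S, x ≠ y → r < dist x y) ∧ S.card = n with hP
  have hP0 : P 0 := ⟨∅, by simp, by simp, rfl⟩
  have hPbound : ∀ n, P n → n ≤ κ := by
    rintro n ⟨S, hS1, hS2, hS3⟩
    rw [← hS3]
    exact hκ S (fun x hx => (hS1 x hx).2) hS2
  set n := Nat.findGreatest P κ with hn
  have hPn : P n := Nat.findGreatest_spec (Nat.zero_le κ) hP0
  obtain ⟨S₀, hS₀AM, hS₀sep, hS₀card⟩ := hPn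
  have hcov : A ∩ M ⊆ ⋃ s ∈ S₀, A ∩ Metric.closedBall s r := by
    intro x hx
    by_contra hxc
    simp only [Set.mem_iUnion, not_exists] at hxc
    have hxball : ∀ s ∈ S₀, r < dist x s := by
      intro s hs
      have := hxc s hs
      have hxnb : x ∉ Metric.closedBall s r := fun hmem => this ⟨hx.1, hmem⟩
      simpa [Metric.mem_closedBall, not_le] using hxnb
    have hxnotin : x ∉ S₀ := by
      intro hxin
      have := hxball x hxin
      simp at this
      linarith
    have hP1 : P (n + 1) := by
      refine ⟨insert x S₀, ?_, ?_, ?_⟩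
      · intro y hy
        rcases Finset.mem_insert.mp hy with rfl | hy
        · exact hx
        · exact hS₀AM y hy
      · intro a ha b hb hab
        rcases Finset.mem_insert.mp ha with ha' | ha'
        · rcases Finset.mem_insert.mp hb with hb' | hb'
          · exact absurd (ha'.trans hb'.symm) hab
          · subst ha'; exact hxball b hb'
        · rcases Finset.mem_insert.mp hb with hb' | hb'
          · subst hb'; rw [dist_comm]; exact hxball a ha'
          · exact hS₀sep a ha' b hb' hab
      · rw [Finset.card_insert_of_notMem hxnotin, hS₀card]
    have hle : n + 1 ≤ κ := hPbound _ hP1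
    exact Nat.findGreatest_is_greatest (Nat.lt_succ_self n) hle hP1
  have hsum : μ (A ∩ M) ≤ (S₀.card : ℝ≥0∞) * ENNReal.ofReal (Real.exp 4 * Z / t ^ 2) := by
    calc μ (A ∩ M) ≤ μ (⋃ s ∈ S₀, A ∩ Metric.closedBall s r) := measure_mono hcov
      _ ≤ ∑ s ∈ S₀, μ (A ∩ Metric.closedBall s r) := measure_biUnion_finset_le S₀ _
      _ ≤ ∑ s ∈ S₀, ENNReal.ofReal (Real.exp 4 * Z / t ^ 2) :=
          Finset.sum_le_sum fun s hs => hball s (hS₀AM s hs)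
      _ = (S₀.card : ℝ≥0∞) * ENNReal.ofReal (Real.exp 4 * Z / t ^ 2) := by
          rw [Finset.sum_const, nsmul_eq_mul]
  have hcard : (S₀.card : ℝ≥0∞) ≤ (κ : ℝ≥0∞) := by
    exact_mod_cast hκ S₀ (fun x hx => (hS₀AM x hx).2) hS₀sep
  have hfinal : μ (A ∩ M) ≤ ENNReal.ofReal (Real.exp 4 * κ * Z / t ^ 2) := by
    calc μ (A ∩ M) ≤ (S₀.card : ℝ≥0∞) * ENNReal.ofReal (Real.exp 4 * Z / t ^ 2) := hsum
      _ ≤ (κ : ℝ≥0∞) * ENNReal.ofReal (Real.exp 4 * Z / t ^ 2) :=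
          mul_le_mul_left hcard _
      _ = ENNReal.ofReal (κ * (Real.exp 4 * Z / t ^ 2)) := by
          rw [ENNReal.ofReal_mul (by positivity)]
          simp [ENNReal.ofReal_natCast]
      _ = ENNReal.ofReal (Real.exp 4 * κ * Z / t ^ 2) := by ring_nf
  have hsub : A ⊆ (A ∩ M) ∪ Mᶜ := by
    intro y hy
    by_cases hyM : y ∈ M
    · exact Or.inl ⟨hy, hyM⟩
    · exact Or.inr hyM
  calc μ A ≤ μ ((A ∩ M) ∪ Mᶜ) := measure_mono hsub
    _ ≤ μ (A ∩ M) + μ Mᶜ := measure_union_le _ _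
    _ = μ (A ∩ M) := by rw [hMnull, add_zero]
    _ ≤ ENNReal.ofReal (Real.exp 4 * κ * Z / t ^ 2) := hfinal
end
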